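/- (Discrete stability of Euler's method) Let f be K-Lipschitz in its second argument with K ≥ 0. Let y and z be two Euler iterations with step size h ≥ 0 starting from y_0 and z_0 = y_0 + ε respectively, i.e., y_{n+1} = y_n + h·f(t_n, y_n), z_{n+1} = z_n + h·f(t_n, z_n). Then for all n with n·h ≤ b - t_0, |z_n - y_n| ≤ exp((b - t_0)·K)·|ε|. -/
import Mathlib


theorem euler_discrete_stability
    (f : ℝ → ℝ → ℝ) (K h t0 b ε : ℝ)
    (hK : 0 ≤ K) (hh : 0 ≤ h) (htb : t0 ≤ b)
    (hf : ∀ t y1 y2 : ℝ, |f t y1 - f t y2| ≤ K * |y1 - y2|)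
    (y z : ℕ → ℝ)
    (hz0 : z 0 = y 0 + ε)
    (hy : ∀ n, y (n + 1) = y n + h * f (t0 + n * h) (y n))
    (hz : ∀ n, z (n + 1) = z n + h * f (t0 + n * h) (z n)) :
    ∀ n : ℕ, (n : ℝ) * h ≤ b - t0 →
      |z n - y n| ≤ Real.exp ((b - t0) * K) * |ε| := by
  have key : ∀ n : ℕ, |z n - y n| ≤ (1 + h * K) ^ n * |ε| := by
    intro n
    induction n with
    | zero => simp [hz0]
    | succ n ih =>
      have h1 : z (n + 1) - y (n + 1)
          = (z n - y n) + h * (f (t0 + n * h) (z n) - f (t0 + n * h) (y n)) := by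
        rw [hy, hz]; ring
      calc |z (n + 1) - y (n + 1)|
          ≤ |z n - y n| + |h * (f (t0 + n * h) (z n) - f (t0 + n * h) (y n))| := by
            rw [h1]; exact abs_add_le _ _
        _ ≤ |z n - y n| + h * (K * |z n - y n|) := by
            gcongr
            rw [abs_mul, abs_of_nonneg hh]
            exact mul_le_mul_of_nonneg_left (hf _ _ _) hh
        _ = (1 + h * K) * |z n - y n| := by ring
        _ ≤ (1 + h * K) * ((1 + h * K) ^ n * |ε|) := by
            have : 0 ≤ 1 + h * K := by positivity
            exact mul_le_mul_of_nonneg_left ih this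
        _ = (1 + h * K) ^ (n + 1) * |ε| := by ring
  intro n hn
  refine (key n).trans ?_
  gcongr
  calc (1 + h * K) ^ n ≤ (Real.exp (h * K)) ^ n := by
        gcongr <;> linarith [Real.add_one_le_exp (h * K), mul_nonneg hh hK]
    _ = Real.exp (n * (h * K)) := by rw [← Real.exp_nat_mul]
    _ ≤ Real.exp ((b - t0) * K) := by
        apply Real.exp_le_exp.mpr
        calc (n : ℝ) * (h * K) = ((n : ℝ) * h) * K := by ring
          _ ≤ (b - t0) * K := mul_le_mul_of_nonneg_right hn hK
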